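/- Let u, v be finite words over an alphabet, and let d denote Hamming distance on words of equal length. Then d(u v^n, v^n u) ≤ n · d(uv, vu) for every n ≥ 1. -/

import Mathlib

/-- `wordPow v n` is the word `v` repeated `n` times. -/
def wordPow {A : Type*} (v : List A) (n : ℕ) : List A := (List.replicate n v).flatten

/-- Hamming distance of two words (of the same length). -/
def hammingDistL {A : Type*} [DecidableEq A] (w x : List A) : ℕ :=
  (List.zipWith (fun a b => if a = b then 0 else 1) w x).sum

lemma ham_self {A : Type*} [DecidableEq A] (a : List A) : hammingDistL a a = 0 := by
  induction a with
  | nil => rfl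
  | cons h t ih =>
    unfold hammingDistL at ih ⊢
    simp [List.zipWith_cons_cons, ih]

lemma ham_prepend {A : Type*} [DecidableEq A] (a w x : List A) :
    hammingDistL (a ++ w) (a ++ x) = hammingDistL w x := by
  unfold hammingDistL
  rw [List.zipWith_append (rfl : a.length = a.length), List.sum_append]
  have := ham_self a
  unfold hammingDistL at this
  omega

lemma ham_append {A : Type*} [DecidableEq A] (w x a : List A) (h : w.length = x.length) :
    hammingDistL (w ++ a) (x ++ a) = hammingDistL w x := by
  unfold hammingDistL
  rw [List.zipWith_append h, List.sum_append]
  have := ham_self a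
  unfold hammingDistL at this
  omega

lemma ham_tri {A : Type*} [DecidableEq A] (w y x : List A)
    (h1 : w.length = y.length) (h2 : y.length = x.length) :
    hammingDistL w x ≤ hammingDistL w y + hammingDistL y x := by
  induction w generalizing y x with
  | nil => simp [hammingDistL]
  | cons a w ih =>
    cases y with
    | nil => simp at h1
    | cons b y =>
      cases x with
      | nil => simp at h2
      | cons c x =>
        simp only [List.length_cons, Nat.succ_inj] at h1 h2
        have htail := ih y x h1 h2
        have hstep : (if a = c then 0 else 1 : ℕ) ≤
            (if a = b then 0 else 1) + (if b = c then 0 else 1) := by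
          by_cases hab : a = b <;> by_cases hbc : b = c <;> by_cases hac : a = c <;>
            simp_all
        simp only [hammingDistL, List.zipWith_cons_cons, List.sum_cons] at htail ⊢
        omega

lemma wordPow_succ {A : Type*} (v : List A) (n : ℕ) :
    wordPow v (n + 1) = v ++ wordPow v n := by
  simp [wordPow, List.replicate_succ]

lemma wordPow_length {A : Type*} (v : List A) (n : ℕ) :
    (wordPow v n).length = n * v.length := by
  simp [wordPow, Nat.mul_comm]

/-- `d(u v^n, v^n u) ≤ n · d(uv, vu)`. -/
theorem stmt11 {A : Type*} [DecidableEq A] (u v : List A) (n : ℕ) (hn : 1 ≤ n) :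
    hammingDistL (u ++ wordPow v n) (wordPow v n ++ u) ≤
      n * hammingDistL (u ++ v) (v ++ u) := by
  induction n with
  | zero => omega
  | succ n ih =>
    rcases Nat.eq_or_lt_of_le hn with h | h
    · have hn0 : n = 0 := by omega
      subst hn0
      simp [wordPow]
    · have hn1 : 1 ≤ n := by omega
      have key :
          hammingDistL (u ++ wordPow v (n + 1)) (wordPow v (n + 1) ++ u) ≤
            hammingDistL (u ++ v) (v ++ u) +
              hammingDistL (u ++ wordPow v n) (wordPow v n ++ u) := by
        have e1 : u ++ wordPow v (n + 1) = (u ++ v) ++ wordPow v n := by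
          rw [wordPow_succ]; simp
        have e2 : wordPow v (n + 1) ++ u = v ++ (wordPow v n ++ u) := by
          rw [wordPow_succ]; simp
        rw [e1, e2]
        have tri := ham_tri ((u ++ v) ++ wordPow v n) ((v ++ u) ++ wordPow v n)
          (v ++ (wordPow v n ++ u))
          (by simp; omega) (by simp; omega)
        have d1 : hammingDistL ((u ++ v) ++ wordPow v n) ((v ++ u) ++ wordPow v n) =
            hammingDistL (u ++ v) (v ++ u) := ham_append _ _ _ (by simp; omega)
        have d2 : hammingDistL ((v ++ u) ++ wordPow v n) (v ++ (wordPow v n ++ u)) =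
            hammingDistL (u ++ wordPow v n) (wordPow v n ++ u) := by
          rw [List.append_assoc]; exact ham_prepend v _ _
        omega
      calc hammingDistL (u ++ wordPow v (n + 1)) (wordPow v (n + 1) ++ u)
          ≤ hammingDistL (u ++ v) (v ++ u) +
              hammingDistL (u ++ wordPow v n) (wordPow v n ++ u) := key
        _ ≤ hammingDistL (u ++ v) (v ++ u) + n * hammingDistL (u ++ v) (v ++ u) :=
            Nat.add_le_add_left (ih hn1) _
        _ = (n + 1) * hammingDistL (u ++ v) (v ++ u) := by ring
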